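/- In FreeLieAlgebra ℝ (Fin 4), the ℓ¹ Lie norm of the fourth Lie Magnus commutator equals 1/3: ‖μ_4^Lie(X_1,X_2,X_3,X_4)‖ = 1/3. Equivalently, Θ_4^Lie = (1/4!)·(1/3). -/

import Mathlib

open scoped Classical BigOperators

noncomputable section

/-- Number of descents of a permutation of `Fin k`:
`des σ = #{1 ≤ i ≤ k−1 : σ(i) > σ(i+1)}`. -/
def descents {k : ℕ} (σ : Equiv.Perm (Fin k)) : ℕ :=
  (Finset.univ.filter fun i : Fin k =>
    ∃ h : (i : ℕ) + 1 < k, σ ⟨(i : ℕ) + 1, h⟩ < σ i).card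

/-- Number of ascents of a permutation of `Fin k`: `asc σ = (k−1) − des σ`. -/
def ascents {k : ℕ} (σ : Equiv.Perm (Fin k)) : ℕ := (k - 1) - descents σ

/-- Right-nested Lie bracket of a list: `[a₁,…,aₖ] ↦ ⁅a₁, ⁅a₂, ⁅…, aₖ⁆…⁆⁆`. -/
def rightBracket {L : Type*} [LieRing L] : List L → L
  | [] => 0
  | [a] => a
  | a :: (b :: rest) => ⁅a, rightBracket (b :: rest)⁆

/-- The `k`-th Lie Magnus commutator (Dynkin form):
`μ_k^Lie = Σ_{σ ∈ S_k} (−1)^{des σ} (asc σ)!(des σ)!/(k!·k) ·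
  ⁅X_{σ(1)}, ⁅…, ⁅X_{σ(k−1)}, X_{σ(k)}⁆…⁆⁆`. -/
def magnusLie (R : Type*) [Field R] (k : ℕ) : FreeLieAlgebra R (Fin k) :=
  ∑ σ : Equiv.Perm (Fin k),
    ((-1 : R) ^ descents σ * ((ascents σ).factorial : R) * ((descents σ).factorial : R) /
        ((k.factorial : R) * (k : R))) •
      rightBracket (List.ofFn fun i : Fin k => FreeLieAlgebra.of R (σ i))

/-- Lie monomials: the smallest subset of the free Lie algebra containing the
canonical generators and closed under the Lie bracket. -/
inductive IsLieMonomial {R : Type*} [CommRing R] {X : Type*} : FreeLieAlgebra R X → Prop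
  | of (x : X) : IsLieMonomial (FreeLieAlgebra.of R x)
  | bracket {a b : FreeLieAlgebra R X} : IsLieMonomial a → IsLieMonomial b →
      IsLieMonomial ⁅a, b⁆

/-- The ℓ¹ Lie norm: infimum of `Σᵢ |cᵢ|` over all finite presentations
`u = Σᵢ cᵢ • mᵢ` with real coefficients `cᵢ` and Lie monomials `mᵢ`. -/
def lieL1Norm {X : Type*} (u : FreeLieAlgebra ℝ X) : ℝ :=
  sInf { s : ℝ | ∃ (n : ℕ) (c : Fin n → ℝ) (m : Fin n → FreeLieAlgebra ℝ X),
    (∀ i, IsLieMonomial (m i)) ∧ u = ∑ i, c i • m i ∧ s = ∑ i, |c i| }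

/-- `Θ_m^Lie := (1/m!) · ‖μ_m^Lie‖_{ℓ¹}`. -/
def ThetaLie (m : ℕ) : ℝ := (1 / (m.factorial : ℝ)) * lieL1Norm (magnusLie ℝ m)

abbrev X (i : Fin 4) : FreeLieAlgebra ℝ (Fin 4) := FreeLieAlgebra.of ℝ i

section Reds
variable {L : Type*} [LieRing L]
theorem red1 (a b c d : L) : ⁅a,⁅b,⁅d,c⁆⁆⁆ = -⁅a,⁅b,⁅c,d⁆⁆⁆ := by
  rw [← lie_skew c d, lie_neg, lie_neg, neg_neg]
theorem red2 (a b c d : L) : ⁅a,⁅d,⁅b,c⁆⁆⁆ = -⁅a,⁅b,⁅c,d⁆⁆⁆ + ⁅a,⁅c,⁅b,d⁆⁆⁆ := by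
  have h : ⁅d,⁅b,c⁆⁆ = -⁅b,⁅c,d⁆⁆ + ⁅c,⁅b,d⁆⁆ := by
    rw [← lie_skew d ⁅b,c⁆, lie_lie]; abel
  rw [h, lie_add, lie_neg]
theorem red3 (a b c d : L) : ⁅d,⁅a,⁅b,c⁆⁆⁆ =
    -⁅a,⁅b,⁅c,d⁆⁆⁆ + ⁅a,⁅c,⁅b,d⁆⁆⁆ + ⁅b,⁅c,⁅a,d⁆⁆⁆ - ⁅c,⁅b,⁅a,d⁆⁆⁆ := by
  rw [← lie_skew d ⁅a,⁅b,c⁆⁆, lie_lie a ⁅b,c⁆, lie_lie b c d, lie_lie b c ⁅a,d⁆, lie_sub]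
  abel
theorem hm3 (a b c d : L) : ⁅⁅a,⁅b,c⁆⁆,d⁆ =
    ⁅a,⁅b,⁅c,d⁆⁆⁆ - ⁅a,⁅c,⁅b,d⁆⁆⁆ - ⁅b,⁅c,⁅a,d⁆⁆⁆ + ⁅c,⁅b,⁅a,d⁆⁆⁆ := by
  rw [lie_lie a ⁅b,c⁆, lie_lie b c d, lie_lie b c ⁅a,d⁆, lie_sub]
  abel
end Reds

def permList : List (Equiv.Perm (Fin 4)) := [
  (1 : Equiv.Perm (Fin 4)),
  (Equiv.swap (2:Fin 4) 3),
  (Equiv.swap (1:Fin 4) 2),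
  (Equiv.swap (1:Fin 4) 2 * Equiv.swap (2:Fin 4) 3),
  (Equiv.swap (1:Fin 4) 3 * Equiv.swap (2:Fin 4) 3),
  (Equiv.swap (1:Fin 4) 3),
  (Equiv.swap (0:Fin 4) 1),
  (Equiv.swap (0:Fin 4) 1 * Equiv.swap (2:Fin 4) 3),
  (Equiv.swap (0:Fin 4) 1 * Equiv.swap (1:Fin 4) 2),
  (Equiv.swap (0:Fin 4) 1 * Equiv.swap (1:Fin 4) 2 * Equiv.swap (2:Fin 4) 3),
  (Equiv.swap (0:Fin 4) 1 * Equiv.swap (1:Fin 4) 3 * Equiv.swap (2:Fin 4) 3),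
  (Equiv.swap (0:Fin 4) 1 * Equiv.swap (1:Fin 4) 3),
  (Equiv.swap (0:Fin 4) 2 * Equiv.swap (1:Fin 4) 2),
  (Equiv.swap (0:Fin 4) 2 * Equiv.swap (1:Fin 4) 2 * Equiv.swap (2:Fin 4) 3),
  (Equiv.swap (0:Fin 4) 2),
  (Equiv.swap (0:Fin 4) 2 * Equiv.swap (2:Fin 4) 3),
  (Equiv.swap (0:Fin 4) 2 * Equiv.swap (1:Fin 4) 3),
  (Equiv.swap (0:Fin 4) 2 * Equiv.swap (1:Fin 4) 3 * Equiv.swap (2:Fin 4) 3),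
  (Equiv.swap (0:Fin 4) 3 * Equiv.swap (1:Fin 4) 3 * Equiv.swap (2:Fin 4) 3),
  (Equiv.swap (0:Fin 4) 3 * Equiv.swap (1:Fin 4) 3),
  (Equiv.swap (0:Fin 4) 3 * Equiv.swap (2:Fin 4) 3),
  (Equiv.swap (0:Fin 4) 3),
  (Equiv.swap (0:Fin 4) 3 * Equiv.swap (1:Fin 4) 2 * Equiv.swap (2:Fin 4) 3),
  (Equiv.swap (0:Fin 4) 3 * Equiv.swap (1:Fin 4) 2)]

theorem hrep : magnusLie ℝ 4 =
    (1/12 : ℝ) • ⁅X 0, ⁅X 1, ⁅X 2, X 3⁆⁆⁆ + (1/12 : ℝ) • ⁅⁅X 0, X 1⁆, ⁅X 2, X 3⁆⁆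
      + (1/12 : ℝ) • ⁅⁅X 0, ⁅X 1, X 2⁆⁆, X 3⁆ + (1/12 : ℝ) • ⁅⁅X 0, ⁅X 1, X 3⁆⁆, X 2⁆ := by
  rw [magnusLie, show (Finset.univ : Finset (Equiv.Perm (Fin 4))) = permList.toFinset from by decide,
    List.sum_toFinset _ (by decide : permList.Nodup)]
  simp only [permList, List.map_cons, List.map_nil, List.sum_cons, List.sum_nil, ascents,
    show descents (1 : Equiv.Perm (Fin 4)) = 0 from by decide,
    show descents (Equiv.swap (2:Fin 4) 3) = 1 from by decide,
    show descents (Equiv.swap (1:Fin 4) 2) = 1 from by decide,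
    show descents (Equiv.swap (1:Fin 4) 2 * Equiv.swap (2:Fin 4) 3) = 1 from by decide,
    show descents (Equiv.swap (1:Fin 4) 3 * Equiv.swap (2:Fin 4) 3) = 1 from by decide,
    show descents (Equiv.swap (1:Fin 4) 3) = 2 from by decide,
    show descents (Equiv.swap (0:Fin 4) 1) = 1 from by decide,
    show descents (Equiv.swap (0:Fin 4) 1 * Equiv.swap (2:Fin 4) 3) = 2 from by decide,
    show descents (Equiv.swap (0:Fin 4) 1 * Equiv.swap (1:Fin 4) 2) = 1 from by decide,
    show descents (Equiv.swap (0:Fin 4) 1 * Equiv.swap (1:Fin 4) 2 * Equiv.swap (2:Fin 4) 3) = 1 from by decide,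
    show descents (Equiv.swap (0:Fin 4) 1 * Equiv.swap (1:Fin 4) 3 * Equiv.swap (2:Fin 4) 3) = 1 from by decide,
    show descents (Equiv.swap (0:Fin 4) 1 * Equiv.swap (1:Fin 4) 3) = 2 from by decide,
    show descents (Equiv.swap (0:Fin 4) 2 * Equiv.swap (1:Fin 4) 2) = 1 from by decide,
    show descents (Equiv.swap (0:Fin 4) 2 * Equiv.swap (1:Fin 4) 2 * Equiv.swap (2:Fin 4) 3) = 2 from by decide,
    show descents (Equiv.swap (0:Fin 4) 2) = 2 from by decide,
    show descents (Equiv.swap (0:Fin 4) 2 * Equiv.swap (2:Fin 4) 3) = 2 from by decide,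
    show descents (Equiv.swap (0:Fin 4) 2 * Equiv.swap (1:Fin 4) 3) = 1 from by decide,
    show descents (Equiv.swap (0:Fin 4) 2 * Equiv.swap (1:Fin 4) 3 * Equiv.swap (2:Fin 4) 3) = 2 from by decide,
    show descents (Equiv.swap (0:Fin 4) 3 * Equiv.swap (1:Fin 4) 3 * Equiv.swap (2:Fin 4) 3) = 1 from by decide,
    show descents (Equiv.swap (0:Fin 4) 3 * Equiv.swap (1:Fin 4) 3) = 2 from by decide,
    show descents (Equiv.swap (0:Fin 4) 3 * Equiv.swap (2:Fin 4) 3) = 2 from by decide,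
    show descents (Equiv.swap (0:Fin 4) 3) = 2 from by decide,
    show descents (Equiv.swap (0:Fin 4) 3 * Equiv.swap (1:Fin 4) 2 * Equiv.swap (2:Fin 4) 3) = 2 from by decide,
    show descents (Equiv.swap (0:Fin 4) 3 * Equiv.swap (1:Fin 4) 2) = 3 from by decide,
    show rightBracket (List.ofFn fun i : Fin 4 => FreeLieAlgebra.of ℝ ((1 : Equiv.Perm (Fin 4)) i)) = ⁅X 0, ⁅X 1, ⁅X 2, X 3⁆⁆⁆ from rfl,
    show rightBracket (List.ofFn fun i : Fin 4 => FreeLieAlgebra.of ℝ ((Equiv.swap (2:Fin 4) 3) i)) = ⁅X 0, ⁅X 1, ⁅X 3, X 2⁆⁆⁆ from rfl,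
    show rightBracket (List.ofFn fun i : Fin 4 => FreeLieAlgebra.of ℝ ((Equiv.swap (1:Fin 4) 2) i)) = ⁅X 0, ⁅X 2, ⁅X 1, X 3⁆⁆⁆ from rfl,
    show rightBracket (List.ofFn fun i : Fin 4 => FreeLieAlgebra.of ℝ ((Equiv.swap (1:Fin 4) 2 * Equiv.swap (2:Fin 4) 3) i)) = ⁅X 0, ⁅X 2, ⁅X 3, X 1⁆⁆⁆ from rfl,
    show rightBracket (List.ofFn fun i : Fin 4 => FreeLieAlgebra.of ℝ ((Equiv.swap (1:Fin 4) 3 * Equiv.swap (2:Fin 4) 3) i)) = ⁅X 0, ⁅X 3, ⁅X 1, X 2⁆⁆⁆ from rfl,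
    show rightBracket (List.ofFn fun i : Fin 4 => FreeLieAlgebra.of ℝ ((Equiv.swap (1:Fin 4) 3) i)) = ⁅X 0, ⁅X 3, ⁅X 2, X 1⁆⁆⁆ from rfl,
    show rightBracket (List.ofFn fun i : Fin 4 => FreeLieAlgebra.of ℝ ((Equiv.swap (0:Fin 4) 1) i)) = ⁅X 1, ⁅X 0, ⁅X 2, X 3⁆⁆⁆ from rfl,
    show rightBracket (List.ofFn fun i : Fin 4 => FreeLieAlgebra.of ℝ ((Equiv.swap (0:Fin 4) 1 * Equiv.swap (2:Fin 4) 3) i)) = ⁅X 1, ⁅X 0, ⁅X 3, X 2⁆⁆⁆ from rfl,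
    show rightBracket (List.ofFn fun i : Fin 4 => FreeLieAlgebra.of ℝ ((Equiv.swap (0:Fin 4) 1 * Equiv.swap (1:Fin 4) 2) i)) = ⁅X 1, ⁅X 2, ⁅X 0, X 3⁆⁆⁆ from rfl,
    show rightBracket (List.ofFn fun i : Fin 4 => FreeLieAlgebra.of ℝ ((Equiv.swap (0:Fin 4) 1 * Equiv.swap (1:Fin 4) 2 * Equiv.swap (2:Fin 4) 3) i)) = ⁅X 1, ⁅X 2, ⁅X 3, X 0⁆⁆⁆ from rfl,
    show rightBracket (List.ofFn fun i : Fin 4 => FreeLieAlgebra.of ℝ ((Equiv.swap (0:Fin 4) 1 * Equiv.swap (1:Fin 4) 3 * Equiv.swap (2:Fin 4) 3) i)) = ⁅X 1, ⁅X 3, ⁅X 0, X 2⁆⁆⁆ from rfl,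
    show rightBracket (List.ofFn fun i : Fin 4 => FreeLieAlgebra.of ℝ ((Equiv.swap (0:Fin 4) 1 * Equiv.swap (1:Fin 4) 3) i)) = ⁅X 1, ⁅X 3, ⁅X 2, X 0⁆⁆⁆ from rfl,
    show rightBracket (List.ofFn fun i : Fin 4 => FreeLieAlgebra.of ℝ ((Equiv.swap (0:Fin 4) 2 * Equiv.swap (1:Fin 4) 2) i)) = ⁅X 2, ⁅X 0, ⁅X 1, X 3⁆⁆⁆ from rfl,
    show rightBracket (List.ofFn fun i : Fin 4 => FreeLieAlgebra.of ℝ ((Equiv.swap (0:Fin 4) 2 * Equiv.swap (1:Fin 4) 2 * Equiv.swap (2:Fin 4) 3) i)) = ⁅X 2, ⁅X 0, ⁅X 3, X 1⁆⁆⁆ from rfl,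
    show rightBracket (List.ofFn fun i : Fin 4 => FreeLieAlgebra.of ℝ ((Equiv.swap (0:Fin 4) 2) i)) = ⁅X 2, ⁅X 1, ⁅X 0, X 3⁆⁆⁆ from rfl,
    show rightBracket (List.ofFn fun i : Fin 4 => FreeLieAlgebra.of ℝ ((Equiv.swap (0:Fin 4) 2 * Equiv.swap (2:Fin 4) 3) i)) = ⁅X 2, ⁅X 1, ⁅X 3, X 0⁆⁆⁆ from rfl,
    show rightBracket (List.ofFn fun i : Fin 4 => FreeLieAlgebra.of ℝ ((Equiv.swap (0:Fin 4) 2 * Equiv.swap (1:Fin 4) 3) i)) = ⁅X 2, ⁅X 3, ⁅X 0, X 1⁆⁆⁆ from rfl,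
    show rightBracket (List.ofFn fun i : Fin 4 => FreeLieAlgebra.of ℝ ((Equiv.swap (0:Fin 4) 2 * Equiv.swap (1:Fin 4) 3 * Equiv.swap (2:Fin 4) 3) i)) = ⁅X 2, ⁅X 3, ⁅X 1, X 0⁆⁆⁆ from rfl,
    show rightBracket (List.ofFn fun i : Fin 4 => FreeLieAlgebra.of ℝ ((Equiv.swap (0:Fin 4) 3 * Equiv.swap (1:Fin 4) 3 * Equiv.swap (2:Fin 4) 3) i)) = ⁅X 3, ⁅X 0, ⁅X 1, X 2⁆⁆⁆ from rfl,
    show rightBracket (List.ofFn fun i : Fin 4 => FreeLieAlgebra.of ℝ ((Equiv.swap (0:Fin 4) 3 * Equiv.swap (1:Fin 4) 3) i)) = ⁅X 3, ⁅X 0, ⁅X 2, X 1⁆⁆⁆ from rfl,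
    show rightBracket (List.ofFn fun i : Fin 4 => FreeLieAlgebra.of ℝ ((Equiv.swap (0:Fin 4) 3 * Equiv.swap (2:Fin 4) 3) i)) = ⁅X 3, ⁅X 1, ⁅X 0, X 2⁆⁆⁆ from rfl,
    show rightBracket (List.ofFn fun i : Fin 4 => FreeLieAlgebra.of ℝ ((Equiv.swap (0:Fin 4) 3) i)) = ⁅X 3, ⁅X 1, ⁅X 2, X 0⁆⁆⁆ from rfl,
    show rightBracket (List.ofFn fun i : Fin 4 => FreeLieAlgebra.of ℝ ((Equiv.swap (0:Fin 4) 3 * Equiv.swap (1:Fin 4) 2 * Equiv.swap (2:Fin 4) 3) i)) = ⁅X 3, ⁅X 2, ⁅X 0, X 1⁆⁆⁆ from rfl,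
    show rightBracket (List.ofFn fun i : Fin 4 => FreeLieAlgebra.of ℝ ((Equiv.swap (0:Fin 4) 3 * Equiv.swap (1:Fin 4) 2) i)) = ⁅X 3, ⁅X 2, ⁅X 1, X 0⁆⁆⁆ from rfl]
  norm_num [Nat.factorial]
  rw [red1 (X 0) (X 1) (X 2) (X 3),
    red1 (X 0) (X 2) (X 1) (X 3),
    red2 (X 0) (X 1) (X 2) (X 3),
    red2 (X 0) (X 2) (X 1) (X 3),
    red1 (X 1) (X 0) (X 2) (X 3),
    red1 (X 1) (X 2) (X 0) (X 3),
    red2 (X 1) (X 0) (X 2) (X 3),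
    red2 (X 1) (X 2) (X 0) (X 3),
    red1 (X 2) (X 0) (X 1) (X 3),
    red1 (X 2) (X 1) (X 0) (X 3),
    red2 (X 2) (X 0) (X 1) (X 3),
    red2 (X 2) (X 1) (X 0) (X 3),
    red3 (X 0) (X 1) (X 2) (X 3),
    red3 (X 0) (X 2) (X 1) (X 3),
    red3 (X 1) (X 0) (X 2) (X 3),
    red3 (X 1) (X 2) (X 0) (X 3),
    red3 (X 2) (X 0) (X 1) (X 3),
    red3 (X 2) (X 1) (X 0) (X 3)]
  module

abbrev A4 := MonoidAlgebra ℝ (FreeMonoid (Fin 4))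

attribute [local instance] LieRing.ofAssociativeRing

def sg (w : List (Fin 4)) : A4 := MonoidAlgebra.single (FreeMonoid.ofList w) (1:ℝ)

def psi : FreeLieAlgebra ℝ (Fin 4) →ₗ⁅ℝ⁆ A4 :=
  FreeLieAlgebra.lift ℝ fun i => sg [i]

def yw : List (Fin 4) → ℤ := fun w =>
  (if w = [0,1,2,3] then 2 else 0) + (if w = [0,1,3,2] then 1 else 0)
  + (if w = [0,2,1,3] then 1 else 0) + (if w = [1,0,2,3] then 1 else 0)
  + (if w = [1,0,3,2] then 1 else 0)

def Fn (i j k l : Fin 4) : ℤ :=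
  yw [i,j,k,l] - yw [i,j,l,k] - yw [i,k,l,j] + yw [i,l,k,j]
  - yw [j,k,l,i] + yw [j,l,k,i] + yw [k,l,j,i] - yw [l,k,j,i]

def Fn2 (i j k l : Fin 4) : ℤ :=
  yw [i,j,k,l] - yw [i,j,l,k] - yw [j,i,k,l] + yw [j,i,l,k]
  - yw [k,l,i,j] + yw [k,l,j,i] + yw [l,k,i,j] - yw [l,k,j,i]

lemma Fn_bound : ∀ i j k l : Fin 4, |Fn i j k l| ≤ 1 := by decide
lemma Fn2_bound : ∀ i j k l : Fin 4, |Fn2 i j k l| ≤ 1 := by decide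
lemma yw_multiset : ∀ w : List (Fin 4), yw w ≠ 0 →
    (↑w : Multiset (Fin 4)) = ({0,1,2,3} : Multiset (Fin 4)) := by
  intro w hw
  unfold yw at hw
  by_cases h1 : w = [0,1,2,3]
  · subst h1; decide
  by_cases h2 : w = [0,1,3,2]
  · subst h2; decide
  by_cases h3 : w = [0,2,1,3]
  · subst h3; decide
  by_cases h4 : w = [1,0,2,3]
  · subst h4; decide
  by_cases h5 : w = [1,0,3,2]
  · subst h5; decide
  simp [h1, h2, h3, h4, h5] at hw

def phiLin : FreeLieAlgebra ℝ (Fin 4) →ₗ[ℝ] ℝ :=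
  (Finsupp.linearCombination ℝ
      (fun w : FreeMonoid (Fin 4) => ((yw (FreeMonoid.toList w)) : ℝ))).comp
    ((MonoidAlgebra.coeffLinearEquiv ℝ).toLinearMap.comp psi.toLinearMap)

lemma psi_nested (i j k l : Fin 4) : psi ⁅X i, ⁅X j, ⁅X k, X l⁆⁆⁆ =
    sg [i,j,k,l] - sg [i,j,l,k] - sg [i,k,l,j] + sg [i,l,k,j]
    - sg [j,k,l,i] + sg [j,l,k,i] + sg [k,l,j,i] - sg [l,k,j,i] := by
  simp only [LieHom.map_lie, Ring.lie_def, psi, FreeLieAlgebra.lift_of_apply, mul_sub, sub_mul,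
    sg, MonoidAlgebra.single_mul_single, one_mul, ← FreeMonoid.ofList_append, List.cons_append,
    List.nil_append]
  abel

lemma psi_sq (i j k l : Fin 4) : psi ⁅⁅X i, X j⁆, ⁅X k, X l⁆⁆ =
    sg [i,j,k,l] - sg [i,j,l,k] - sg [j,i,k,l] + sg [j,i,l,k]
    - sg [k,l,i,j] + sg [k,l,j,i] + sg [l,k,i,j] - sg [l,k,j,i] := by
  simp only [LieHom.map_lie, Ring.lie_def, psi, FreeLieAlgebra.lift_of_apply, mul_sub, sub_mul,
    sg, MonoidAlgebra.single_mul_single, one_mul, ← FreeMonoid.ofList_append, List.cons_append,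
    List.nil_append]
  abel

lemma phi_nested (i j k l : Fin 4) : phiLin ⁅X i, ⁅X j, ⁅X k, X l⁆⁆⁆ = ((Fn i j k l : ℤ) : ℝ) := by
  rw [phiLin, LinearMap.comp_apply, LinearMap.comp_apply]
  erw [psi_nested]
  simp only [map_sub, map_add, sg, LinearMap.comp_apply, LinearEquiv.coe_coe,
    MonoidAlgebra.coeffLinearEquiv_apply, MonoidAlgebra.coeff_single,
    Finsupp.linearCombination_single, FreeMonoid.toList_ofList,
    smul_eq_mul, one_mul, Fn]
  push_cast
  ring

lemma phi_sq (i j k l : Fin 4) : phiLin ⁅⁅X i, X j⁆, ⁅X k, X l⁆⁆ = ((Fn2 i j k l : ℤ) : ℝ) := by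
  rw [phiLin, LinearMap.comp_apply, LinearMap.comp_apply]
  erw [psi_sq]
  simp only [map_sub, map_add, sg, LinearMap.comp_apply, LinearEquiv.coe_coe,
    MonoidAlgebra.coeffLinearEquiv_apply, MonoidAlgebra.coeff_single,
    Finsupp.linearCombination_single, FreeMonoid.toList_ofList,
    smul_eq_mul, one_mul, Fn2]
  push_cast
  ring

inductive MonoOn : Multiset (Fin 4) → FreeLieAlgebra ℝ (Fin 4) → Prop
  | of (x : Fin 4) : MonoOn {x} (FreeLieAlgebra.of ℝ x)
  | brk {M N : Multiset (Fin 4)} {a b : FreeLieAlgebra ℝ (Fin 4)} :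
      MonoOn M a → MonoOn N b → MonoOn (M + N) ⁅a, b⁆

lemma exists_monoOn {m : FreeLieAlgebra ℝ (Fin 4)} (h : IsLieMonomial m) :
    ∃ M, MonoOn M m := by
  induction h with
  | of x => exact ⟨{x}, MonoOn.of x⟩
  | bracket _ _ iha ihb =>
    obtain ⟨M, hM⟩ := iha; obtain ⟨N, hN⟩ := ihb
    exact ⟨M + N, MonoOn.brk hM hN⟩

lemma card_le_four (s : Multiset (Fin 4)) (h : s.Nodup) : s.card ≤ 4 := by
  have h1 : (⟨s, h⟩ : Finset (Fin 4)).card ≤ (Finset.univ : Finset (Fin 4)).card :=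
    Finset.card_le_univ _
  simpa using h1

lemma monoOn_supp {M : Multiset (Fin 4)} {m : FreeLieAlgebra ℝ (Fin 4)} (h : MonoOn M m) :
    ∀ w : FreeMonoid (Fin 4), (psi m).coeff w ≠ 0 → (↑(FreeMonoid.toList w) : Multiset (Fin 4)) = M := by
  induction h with
  | of x =>
    intro w hw
    have hx : psi (FreeLieAlgebra.of ℝ x) = sg [x] := by
      simp [psi]
    rw [hx, sg] at hw
    have hxw : FreeMonoid.ofList [x] = w := by
      by_contra hne
      exact hw (Finsupp.single_eq_of_ne (Ne.symm hne))
    rw [← hxw]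
    rfl
  | @brk M N a b _ _ iha ihb =>
    intro w hw
    have key : ∀ (f g : A4) (Mf Mg : Multiset (Fin 4)),
        (∀ u, f.coeff u ≠ 0 → (↑(FreeMonoid.toList u) : Multiset (Fin 4)) = Mf) →
        (∀ u, g.coeff u ≠ 0 → (↑(FreeMonoid.toList u) : Multiset (Fin 4)) = Mg) →
        (f * g).coeff w ≠ 0 → (↑(FreeMonoid.toList w) : Multiset (Fin 4)) = Mf + Mg := by
      intro f g Mf Mg hf hg hfg
      have hw' : w ∈ (f * g).coeff.support := Finsupp.mem_support_iff.2 hfg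
      have hmem := MonoidAlgebra.support_coeff_mul_subset f g hw'
      rw [Finset.mem_mul] at hmem
      obtain ⟨u, hu, v, hv, huv⟩ := hmem
      rw [← huv, FreeMonoid.toList_mul,
        show (↑(FreeMonoid.toList u ++ FreeMonoid.toList v) : Multiset (Fin 4)) =
          (↑(FreeMonoid.toList u) : Multiset (Fin 4)) + ↑(FreeMonoid.toList v) from
            (Multiset.coe_add _ _).symm,
        hf u (Finsupp.mem_support_iff.1 hu), hg v (Finsupp.mem_support_iff.1 hv)]
    have hpsi : psi ⁅a, b⁆ = psi a * psi b - psi b * psi a := by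
      rw [LieHom.map_lie, Ring.lie_def]
    rw [hpsi, MonoidAlgebra.coeff_sub, Finsupp.sub_apply] at hw
    rcases (by
      by_contra hcon
      push_neg at hcon
      rw [hcon.1, hcon.2, sub_zero] at hw
      exact hw rfl : (psi a * psi b).coeff w ≠ 0 ∨ (psi b * psi a).coeff w ≠ 0) with h1 | h1
    · exact key _ _ _ _ iha ihb h1
    · rw [key _ _ _ _ ihb iha h1]; exact add_comm N M

lemma brk_flip {L : Type*} [LieRing L] (u v : L) : ⁅u, v⁆ = -⁅v, u⁆ := by
  rw [← lie_skew u v]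

lemma neg_unit {ε : ℝ} (h : ε = 1 ∨ ε = -1) : -ε = 1 ∨ -ε = -1 := by
  rcases h with rfl | rfl
  · right; norm_num
  · left; norm_num

lemma mul_unit {ε δ : ℝ} (h : ε = 1 ∨ ε = -1) (h' : δ = 1 ∨ δ = -1) :
    ε * δ = 1 ∨ ε * δ = -1 := by
  rcases h with rfl | rfl <;> rcases h' with rfl | rfl <;> norm_num

lemma classify : ∀ {M : Multiset (Fin 4)} {m : FreeLieAlgebra ℝ (Fin 4)}, MonoOn M m → M.Nodup →
    (∃ i, M.card = 1 ∧ m = X i) ∨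
    (∃ (ε : ℝ) (i j : Fin 4), (ε = 1 ∨ ε = -1) ∧ M.card = 2 ∧ m = ε • ⁅X i, X j⁆) ∨
    (∃ (ε : ℝ) (i j k : Fin 4), (ε = 1 ∨ ε = -1) ∧ M.card = 3 ∧ m = ε • ⁅X i, ⁅X j, X k⁆⁆) ∨
    (∃ (ε : ℝ) (i j k l : Fin 4), (ε = 1 ∨ ε = -1) ∧ M.card = 4 ∧
      (m = ε • ⁅X i, ⁅X j, ⁅X k, X l⁆⁆⁆ ∨ m = ε • ⁅⁅X i, X j⁆, ⁅X k, X l⁆⁆)) := by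
  intro M m h
  induction h with
  | of x => exact fun _ => Or.inl ⟨x, by simp, rfl⟩
  | @brk M N a b ha hb iha ihb =>
    intro hnd
    have hle := card_le_four _ hnd
    rw [Multiset.card_add] at hle
    rw [Multiset.nodup_add] at hnd
    have hcadd : (M + N).card = M.card + N.card := Multiset.card_add M N
    rcases iha hnd.1 with ⟨i, hcM, rfl⟩ | ⟨ε, i, j, hε, hcM, rfl⟩ |
        ⟨ε, i, j, k, hε, hcM, rfl⟩ | ⟨ε, i, j, k, l, hε, hcM, hm⟩
    · -- a = X i
      rcases ihb hnd.2.1 with ⟨i', hcN, rfl⟩ | ⟨δ, i', j', hδ, hcN, rfl⟩ |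
          ⟨δ, i', j', k', hδ, hcN, rfl⟩ | ⟨δ, i', j', k', l', hδ, hcN, hm'⟩
      · exact Or.inr (Or.inl ⟨1, i, i', Or.inl rfl, by omega, (one_smul ℝ _).symm⟩)
      · exact Or.inr (Or.inr (Or.inl ⟨δ, i, i', j', hδ, by omega, by rw [lie_smul]⟩))
      · refine Or.inr (Or.inr (Or.inr ⟨δ, i, i', j', k', hδ, by omega, Or.inl ?_⟩))
        rw [lie_smul]
      · omega
    · -- a = ε • ⁅X i, X j⁆
      rcases ihb hnd.2.1 with ⟨i', hcN, rfl⟩ | ⟨δ, i', j', hδ, hcN, rfl⟩ |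
          ⟨δ, i', j', k', hδ, hcN, rfl⟩ | ⟨δ, i', j', k', l', hδ, hcN, hm'⟩
      · refine Or.inr (Or.inr (Or.inl ⟨-ε, i', i, j, neg_unit hε, by omega, ?_⟩))
        rw [smul_lie, brk_flip ⁅X i, X j⁆ (X i'), smul_neg, ← neg_smul]
      · refine Or.inr (Or.inr (Or.inr ⟨ε * δ, i, j, i', j', mul_unit hε hδ, by omega,
          Or.inr ?_⟩))
        rw [smul_lie, lie_smul, smul_smul]
      · omega
      · omega
    · -- a = ε • ⁅X i, ⁅X j, X k⁆⁆
      rcases ihb hnd.2.1 with ⟨i', hcN, rfl⟩ | ⟨δ, i', j', hδ, hcN, rfl⟩ |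
          ⟨δ, i', j', k', hδ, hcN, rfl⟩ | ⟨δ, i', j', k', l', hδ, hcN, hm'⟩
      · refine Or.inr (Or.inr (Or.inr ⟨-ε, i', i, j, k, neg_unit hε, by omega, Or.inl ?_⟩))
        rw [smul_lie, brk_flip ⁅X i, ⁅X j, X k⁆⁆ (X i'), smul_neg, ← neg_smul]
      · omega
      · omega
      · omega
    · -- card M = 4
      rcases ihb hnd.2.1 with ⟨i', hcN, rfl⟩ | ⟨δ, i', j', hδ, hcN, rfl⟩ |
          ⟨δ, i', j', k', hδ, hcN, rfl⟩ | ⟨δ, i', j', k', l', hδ, hcN, hm'⟩ <;> omega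

lemma phi_mono_bound {m : FreeLieAlgebra ℝ (Fin 4)} (h : IsLieMonomial m) : |phiLin m| ≤ 1 := by
  obtain ⟨M, hM⟩ := exists_monoOn h
  by_cases h4 : M = ({0, 1, 2, 3} : Multiset (Fin 4))
  · subst h4
    rcases classify hM (by decide) with ⟨i, hc, _⟩ | ⟨ε, i, j, hε, hc, _⟩ |
        ⟨ε, i, j, k, hε, hc, _⟩ | ⟨ε, i, j, k, l, hε, _, hm | hm⟩
    · exact absurd hc (by decide)
    · exact absurd hc (by decide)
    · exact absurd hc (by decide)
    · rw [hm, map_smul, smul_eq_mul, abs_mul, phi_nested]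
      have h1 : |ε| = 1 := by rcases hε with rfl | rfl <;> norm_num
      rw [h1, one_mul]
      have := Fn_bound i j k l
      calc |((Fn i j k l : ℤ) : ℝ)| = ((|Fn i j k l| : ℤ) : ℝ) := by
            rw [Int.cast_abs]
        _ ≤ 1 := by exact_mod_cast this
    · rw [hm, map_smul, smul_eq_mul, abs_mul, phi_sq]
      have h1 : |ε| = 1 := by rcases hε with rfl | rfl <;> norm_num
      rw [h1, one_mul]
      have := Fn2_bound i j k l
      calc |((Fn2 i j k l : ℤ) : ℝ)| = ((|Fn2 i j k l| : ℤ) : ℝ) := by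
            rw [Int.cast_abs]
        _ ≤ 1 := by exact_mod_cast this
  · have hzero : phiLin m = 0 := by
      rw [phiLin, LinearMap.comp_apply]
      rw [Finsupp.linearCombination_apply, Finsupp.sum]
      apply Finset.sum_eq_zero
      intro w hw
      have hne : (psi m).coeff w ≠ 0 := Finsupp.mem_support_iff.1 hw
      have hyw : yw (FreeMonoid.toList w) = 0 := by
        by_contra hy
        exact h4 ((monoOn_supp hM w hne).symm.trans (yw_multiset _ hy))
      rw [hyw]
      simp
    rw [hzero]
    norm_num

lemma phi_mu : phiLin (magnusLie ℝ 4) = 1 / 3 := by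
  rw [hrep, hm3 (X 0) (X 1) (X 2) (X 3), hm3 (X 0) (X 1) (X 3) (X 2)]
  simp only [map_add, map_smul, map_sub, phi_nested, phi_sq, smul_eq_mul]
  norm_num [show Fn 0 1 2 3 = 1 from by decide, show Fn2 0 1 2 3 = 1 from by decide,
    show Fn 0 2 1 3 = 0 from by decide, show Fn 1 2 0 3 = -1 from by decide,
    show Fn 2 1 0 3 = -1 from by decide, show Fn 0 1 3 2 = -1 from by decide,
    show Fn 0 3 1 2 = -1 from by decide, show Fn 1 3 0 2 = -1 from by decide,
    show Fn 3 1 0 2 = 0 from by decide]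

lemma mem_third : (1/3 : ℝ) ∈ {s : ℝ | ∃ (n : ℕ) (c : Fin n → ℝ)
    (m : Fin n → FreeLieAlgebra ℝ (Fin 4)),
    (∀ i, IsLieMonomial (m i)) ∧ magnusLie ℝ 4 = ∑ i, c i • m i ∧ s = ∑ i, |c i|} := by
  refine ⟨4, fun _ => 1/12, ![⁅X 0, ⁅X 1, ⁅X 2, X 3⁆⁆⁆, ⁅⁅X 0, X 1⁆, ⁅X 2, X 3⁆⁆,
    ⁅⁅X 0, ⁅X 1, X 2⁆⁆, X 3⁆, ⁅⁅X 0, ⁅X 1, X 3⁆⁆, X 2⁆], ?_, ?_, ?_⟩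
  · intro i
    fin_cases i
    · exact .bracket (.of _) (.bracket (.of _) (.bracket (.of _) (.of _)))
    · exact .bracket (.bracket (.of _) (.of _)) (.bracket (.of _) (.of _))
    · exact .bracket (.bracket (.of _) (.bracket (.of _) (.of _))) (.of _)
    · exact .bracket (.bracket (.of _) (.bracket (.of _) (.of _))) (.of _)
  · rw [hrep]
    simp [Fin.sum_univ_four]
  · have habs : |(1/12 : ℝ)| = 1/12 := abs_of_nonneg (by norm_num)
    norm_num [Fin.sum_univ_four, habs]

lemma lower_bound : ∀ s ∈ {s : ℝ | ∃ (n : ℕ) (c : Fin n → ℝ)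
    (m : Fin n → FreeLieAlgebra ℝ (Fin 4)),
    (∀ i, IsLieMonomial (m i)) ∧ magnusLie ℝ 4 = ∑ i, c i • m i ∧ s = ∑ i, |c i|},
    (1/3 : ℝ) ≤ s := by
  rintro s ⟨n, c, m, hm, hu, rfl⟩
  have h2 : phiLin (magnusLie ℝ 4) = ∑ i, c i * phiLin (m i) := by
    rw [hu, map_sum]
    exact Finset.sum_congr rfl fun i _ => by rw [map_smul, smul_eq_mul]
  calc (1/3 : ℝ) = |∑ i, c i * phiLin (m i)| := by
        rw [← h2, phi_mu, abs_of_nonneg (by norm_num : (0:ℝ) ≤ 1/3)]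
    _ ≤ ∑ i, |c i * phiLin (m i)| := Finset.abs_sum_le_sum_abs _ _
    _ ≤ ∑ i, |c i| := Finset.sum_le_sum fun i _ => by
        rw [abs_mul]
        exact mul_le_of_le_one_right (abs_nonneg _) (phi_mono_bound (hm i))

theorem lieL1Norm_magnusLie_four' :
    lieL1Norm (magnusLie ℝ 4) = 1 / 3 := by
  rw [lieL1Norm]
  exact le_antisymm (csInf_le ⟨1/3, fun s hs => lower_bound s hs⟩ mem_third)
    (le_csInf ⟨1/3, mem_third⟩ lower_bound)


/-- `‖μ_4^Lie‖_{ℓ¹} = 1/3`; equivalently `Θ_4^Lie = (1/4!)·(1/3)`. -/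
theorem lieL1Norm_magnusLie_four :
    lieL1Norm (magnusLie ℝ 4) = 1 / 3 ∧
    ThetaLie 4 = (1 / (Nat.factorial 4 : ℝ)) * (1 / 3) := by
  have h : lieL1Norm (magnusLie ℝ 4) = 1 / 3 := lieL1Norm_magnusLie_four'
  exact ⟨h, by rw [ThetaLie, h]⟩

end
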